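/- Let X₁,…,X_r be i.i.d. Bin(n,p), 0 < p < 1, Z = min_i X_i, δ ∈ (0,1). Suppose there exists b ∈ [0,p) with KL(b‖p) = (log₂ r - log₂ ln(2/δ) - 4 log₂(n+1) - max(0, log₂(p/(1-p))))/n. Then P(Z > b·n) ≤ δ/2. -/

import Mathlib

open MeasureTheory ProbabilityTheory

/-- Binary KL divergence in bits: KL(a‖p) (conventions 0·log 0 = 0 hold since Real.log 0 = 0). -/
noncomputable def klB (a p : ℝ) : ℝ :=
  a * Real.logb 2 (a / p) + (1 - a) * Real.logb 2 ((1 - a) / (1 - p))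

/-- P(Bin(n,p) = k). -/
noncomputable def binPMF (n k : ℕ) (p : ℝ) : ℝ :=
  (n.choose k : ℝ) * p ^ k * (1 - p) ^ (n - k)


-- positivity of KL
lemma klB_aux_pos {b p : ℝ} (hb0 : 0 ≤ b) (hbp : b < p) (hp1 : p < 1) :
    0 < b * Real.logb 2 (b / p) + (1 - b) * Real.logb 2 ((1 - b) / (1 - p)) := by
  have hp : 0 < p := lt_of_le_of_lt hb0 hbp
  have h1b : 0 < 1 - b := by linarith
  have h1p : 0 < 1 - p := by linarith
  have hlog2 : 0 < Real.log 2 := Real.log_pos (by norm_num)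
  have hA : b - p ≤ b * Real.log (b / p) := by
    rcases eq_or_lt_of_le hb0 with h | h
    · simp [← h]; linarith
    · have hx : 0 < b / p := by positivity
      have := Real.log_le_sub_one_of_pos (show 0 < p / b by positivity)
      have hinv : Real.log (p / b) = - Real.log (b / p) := by
        rw [← Real.log_inv]; congr 1; field_simp
      rw [hinv] at this
      have : 1 - p / b ≤ Real.log (b / p) := by linarith
      calc b - p = b * (1 - p / b) := by field_simp
        _ ≤ b * Real.log (b / p) := by nlinarith
  have hB : p - b < (1 - b) * Real.log ((1 - b) / (1 - p)) := by
    have hx : 0 < (1 - p) / (1 - b) := by positivity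
    have hne : (1 - p) / (1 - b) ≠ 1 := by
      intro h
      have : 1 - p = 1 - b := by field_simp at h; linarith
      linarith
    have := Real.log_lt_sub_one_of_pos hx hne
    have hinv : Real.log ((1 - p) / (1 - b)) = - Real.log ((1 - b) / (1 - p)) := by
      rw [← Real.log_inv]; congr 1; field_simp
    rw [hinv] at this
    have h2 : 1 - (1 - p) / (1 - b) < Real.log ((1 - b) / (1 - p)) := by linarith
    calc p - b = (1 - b) * (1 - (1 - p) / (1 - b)) := by field_simp; ring
      _ < (1 - b) * Real.log ((1 - b) / (1 - p)) := by nlinarith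
  have e1 : Real.logb 2 (b / p) = Real.log (b / p) / Real.log 2 := rfl
  have e2 : Real.logb 2 ((1 - b) / (1 - p)) = Real.log ((1 - b) / (1 - p)) / Real.log 2 := rfl
  rw [e1, e2]
  have : 0 < b * Real.log (b / p) + (1 - b) * Real.log ((1 - b) / (1 - p)) := by linarith
  have := div_pos this hlog2
  calc (0:ℝ) < (b * Real.log (b / p) + (1 - b) * Real.log ((1 - b) / (1 - p))) / Real.log 2 := this
    _ = b * (Real.log (b / p) / Real.log 2) + (1 - b) * (Real.log ((1 - b) / (1 - p)) / Real.log 2) := by ring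


lemma step_up (n K j : ℕ) (hKj : K ≤ j) (hjn : j < n) :
    n.choose (j+1) * K ≤ n.choose j * (n - K) := by
  have h1 : n.choose (j+1) * (j+1) = n.choose j * (n - j) := Nat.choose_succ_right_eq n j
  have h2 : K * (n - j) ≤ (j + 1) * (n - K) := by
    have hKn : K ≤ n := le_of_lt (lt_of_le_of_lt hKj hjn)
    zify [hKn, le_of_lt hjn]
    nlinarith [hKj, hjn]
  have h3 : n.choose (j+1) * K * (j+1) ≤ n.choose j * (n - K) * (j+1) := by
    calc n.choose (j+1) * K * (j+1) = n.choose (j+1) * (j+1) * K := by ring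
      _ = n.choose j * (n - j) * K := by rw [h1]
      _ = n.choose j * (K * (n - j)) := by ring
      _ ≤ n.choose j * ((j+1) * (n - K)) := Nat.mul_le_mul_left _ h2
      _ = n.choose j * (n - K) * (j+1) := by ring
  exact Nat.le_of_mul_le_mul_right h3 (Nat.succ_pos j)

lemma step_down (n K j : ℕ) (hKn : K ≤ n) (hjK : j + 1 ≤ K) :
    n.choose j * (n - K) ≤ n.choose (j+1) * K := by
  have h1 : n.choose (j+1) * (j+1) = n.choose j * (n - j) := Nat.choose_succ_right_eq n j
  have h2 : (j + 1) * (n - K) ≤ K * (n - j) := by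
    have hjn : j ≤ n := le_trans (le_of_lt (Nat.lt_of_succ_le hjK)) hKn
    zify [hKn, hjn]
    nlinarith [hjK, hKn]
  have h3 : n.choose j * (n - K) * (j+1) ≤ n.choose (j+1) * K * (j+1) := by
    calc n.choose j * (n - K) * (j+1) = n.choose j * ((j+1) * (n - K)) := by ring
      _ ≤ n.choose j * (K * (n - j)) := Nat.mul_le_mul_left _ h2
      _ = n.choose j * (n - j) * K := by ring
      _ = n.choose (j+1) * (j+1) * K := by rw [h1]
      _ = n.choose (j+1) * K * (j+1) := by ring
  exact Nat.le_of_mul_le_mul_right h3 (Nat.succ_pos j)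

lemma term_le_max (n K : ℕ) (hK : K ≤ n) (j : ℕ) :
    n.choose j * K^j * (n-K)^(n-j) ≤ n.choose K * K^K * (n-K)^(n-K) := by
  rcases le_or_gt K j with hKj | hjK
  · -- j ≥ K
    have main : ∀ d, ∀ i, i = K + d → n.choose i * K^i * (n-K)^(n-i) ≤ n.choose K * K^K * (n-K)^(n-K) := by
      intro d
      induction d with
      | zero => intro i h; subst h; simp
      | succ m ih =>
        intro i h
        rcases le_or_gt i n with hin | hin
        · have hKm : K ≤ K + m := Nat.le_add_right _ _
          have hmn : K + m < n := by omega
          calc n.choose i * K^i * (n-K)^(n-i)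
              = (n.choose (K+m+1) * K) * K^(K+m) * (n-K)^(n-(K+m+1)) := by
                subst h; ring
            _ ≤ (n.choose (K+m) * (n-K)) * K^(K+m) * (n-K)^(n-(K+m+1)) := by
                exact Nat.mul_le_mul_right _ (Nat.mul_le_mul_right _ (step_up n K (K+m) hKm hmn))
            _ = n.choose (K+m) * K^(K+m) * ((n-K)^(n-(K+m+1)) * (n-K)) := by ring
            _ = n.choose (K+m) * K^(K+m) * (n-K)^(n-(K+m)) := by
                rw [← pow_succ]
                congr 2
                omega
            _ ≤ _ := ih (K+m) rfl
        · rw [Nat.choose_eq_zero_of_lt hin]; simp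
    exact main (j - K) j (by omega)
  · -- j < K
    have main : ∀ d, ∀ i, i + d = K → n.choose i * K^i * (n-K)^(n-i) ≤ n.choose K * K^K * (n-K)^(n-K) := by
      intro d
      induction d with
      | zero => intro i h; simp at h; subst h; rfl
      | succ m ih =>
        intro i h
        have hiK : i + 1 ≤ K := by omega
        calc n.choose i * K^i * (n-K)^(n-i)
            = (n.choose i * (n-K)) * K^i * (n-K)^(n-(i+1)) := by
              have hh : n - i = (n - (i+1)) + 1 := by omega
              rw [hh]; ring
          _ ≤ (n.choose (i+1) * K) * K^i * (n-K)^(n-(i+1)) := by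
              exact Nat.mul_le_mul_right _ (Nat.mul_le_mul_right _ (step_down n K i hK hiK))
          _ = n.choose (i+1) * K^(i+1) * (n-K)^(n-(i+1)) := by ring
          _ ≤ _ := ih (i+1) (by omega)
    exact main (K - j) j (by omega)

lemma sum_terms (n K : ℕ) (hK : K ≤ n) :
    n^n = ∑ j ∈ Finset.range (n+1), n.choose j * K^j * (n-K)^(n-j) := by
  have h := add_pow K (n - K) n
  rw [Nat.add_sub_cancel' hK] at h
  rw [h]
  apply Finset.sum_congr rfl
  intro j hj
  push_cast [Nat.cast_id]
  ring

lemma maxterm (n K : ℕ) (hK : K ≤ n) :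
    n^n ≤ (n+1) * (n.choose K * K^K * (n-K)^(n-K)) := by
  rw [sum_terms n K hK]
  calc ∑ j ∈ Finset.range (n+1), n.choose j * K^j * (n-K)^(n-j)
      ≤ ∑ j ∈ Finset.range (n+1), n.choose K * K^K * (n-K)^(n-K) :=
        Finset.sum_le_sum (fun j _ => term_le_max n K hK j)
    _ = (n+1) * (n.choose K * K^K * (n-K)^(n-K)) := by
        rw [Finset.sum_const, Finset.card_range]; ring


-- x ^ (x*n) ≥ 1/(e n) when 0 < x, x*n ≤ 1
lemma helper2 (n : ℕ) (x : ℝ) (hx : 0 < x) (hn : 1 ≤ n) (hv1 : x * n ≤ 1) :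
    1 / (Real.exp 1 * n) ≤ x ^ (x * (n:ℝ)) := by
  have hn0 : (0:ℝ) < n := by exact_mod_cast hn
  set v := x * (n:ℝ) with hv
  have hv0 : 0 < v := by positivity
  have hlnx : Real.log x = Real.log v - Real.log n := by
    rw [hv, Real.log_mul (ne_of_gt hx) (ne_of_gt hn0)]; ring
  have hvlnv : -1 ≤ v * Real.log v := by
    have h1 : 1 - 1/v ≤ Real.log v := by
      have := Real.log_le_sub_one_of_pos (show 0 < 1/v by positivity)
      rw [Real.log_div one_ne_zero (ne_of_gt hv0), Real.log_one] at this
      linarith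
    have h2 := mul_le_mul_of_nonneg_left h1 (le_of_lt hv0)
    have h3 : v * (1 - 1/v) = v - 1 := by field_simp
    rw [h3] at h2
    linarith
  have hlnn : 0 ≤ Real.log n := Real.log_nonneg (by exact_mod_cast hn)
  have hexp : x ^ v = Real.exp (v * Real.log x) := by
    rw [Real.rpow_def_of_pos hx]; ring_nf
  rw [hexp]
  have hbound : -1 - Real.log n ≤ v * Real.log x := by
    rw [hlnx]
    have : v * Real.log n ≤ Real.log n := by nlinarith [hv1, hv0, hlnn]
    nlinarith [hvlnv]
  calc 1 / (Real.exp 1 * n) = Real.exp (-1 - Real.log n) := by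
        rw [Real.exp_sub, Real.exp_log hn0, Real.exp_neg]
        field_simp
    _ ≤ Real.exp (v * Real.log x) := Real.exp_le_exp.mpr hbound

-- ((m-1)/m)^m ≥ e^{-2} for m ≥ 2
lemma helper3 (m : ℕ) (hm : 2 ≤ m) : Real.exp (-2) ≤ (((m:ℝ)-1)/m) ^ (m:ℕ) := by
  have hm0 : (0:ℝ) < m := by positivity
  have hm1 : (0:ℝ) < (m:ℝ) - 1 := by
    have : (2:ℝ) ≤ m := by exact_mod_cast hm
    linarith
  have hx : (0:ℝ) < ((m:ℝ)-1)/m := by positivity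
  have hlog : -(1/((m:ℝ)-1)) ≤ Real.log (((m:ℝ)-1)/m) := by
    have := Real.log_le_sub_one_of_pos (show 0 < (m:ℝ)/((m:ℝ)-1) by positivity)
    have hinv : Real.log ((m:ℝ)/((m:ℝ)-1)) = - Real.log (((m:ℝ)-1)/m) := by
      rw [← Real.log_inv]; congr 1; field_simp
    rw [hinv] at this
    have h2 : (m:ℝ)/((m:ℝ)-1) - 1 = 1/((m:ℝ)-1) := by field_simp; ring
    linarith [this, h2.ge]
  have key : -2 ≤ (m:ℝ) * Real.log (((m:ℝ)-1)/m) := by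
    have h2 : (2:ℝ) ≤ m := by exact_mod_cast hm
    have hfrac : (m:ℝ) * (1/((m:ℝ)-1)) ≤ 2 := by
      rw [mul_one_div, div_le_iff₀ hm1]; linarith
    have := mul_le_mul_of_nonneg_left hlog (le_of_lt hm0)
    have heq : (m:ℝ) * -(1/((m:ℝ)-1)) = -((m:ℝ) * (1/((m:ℝ)-1))) := by ring
    nlinarith
  calc Real.exp (-2) ≤ Real.exp ((m:ℝ) * Real.log (((m:ℝ)-1)/m)) := Real.exp_le_exp.mpr key
    _ = Real.exp (Real.log (((m:ℝ)-1)/m) * (m:ℝ)) := by rw [mul_comm]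
    _ = (((m:ℝ)-1)/m) ^ ((m:ℝ)) := (Real.rpow_def_of_pos hx _).symm
    _ = (((m:ℝ)-1)/m) ^ (m:ℕ) := Real.rpow_natCast _ m

-- term at α=K/n lower bound (real version of maxterm)
lemma maxterm_real (n K : ℕ) (hn : 1 ≤ n) (hK : K ≤ n) :
    (1:ℝ) / (n+1) ≤ (n.choose K : ℝ) * ((K:ℝ)/n)^(K:ℕ) * (((n:ℝ)-K)/n)^(n-K : ℕ) := by
  have hn0 : (0:ℝ) < n := by exact_mod_cast hn
  have hnn : (0:ℝ) < (n:ℝ)^(n:ℕ) := by positivity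
  have hcast := maxterm n K hK
  have hcastR : (n:ℝ)^(n:ℕ) ≤ ((n:ℝ)+1) * ((n.choose K : ℝ) * (K:ℝ)^(K:ℕ) * ((n:ℝ)-K)^(n-K:ℕ)) := by
    have := (Nat.cast_le (α := ℝ)).mpr hcast
    push_cast at this
    rw [Nat.cast_sub hK] at this
    exact this
  rw [div_pow, div_pow]
  have hpowsplit : (n:ℝ)^(K:ℕ) * (n:ℝ)^(n-K:ℕ) = (n:ℝ)^(n:ℕ) := by
    rw [← pow_add]
    congr 1
    omega
  rw [div_le_iff₀ (by positivity)]
  have expand : (n.choose K : ℝ) * ((K:ℝ)^(K:ℕ) / (n:ℝ)^(K:ℕ)) * (((n:ℝ)-K)^(n-K:ℕ) / (n:ℝ)^(n-K:ℕ)) * ((n:ℝ)+1)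
      = ((n:ℝ)+1) * ((n.choose K : ℝ) * (K:ℝ)^(K:ℕ) * ((n:ℝ)-K)^(n-K:ℕ)) / ((n:ℝ)^(K:ℕ) * (n:ℝ)^(n-K:ℕ)) := by
    field_simp
  rw [expand, hpowsplit, le_div_iff₀ hnn, one_mul]
  exact hcastR

-- The main G bound
set_option maxHeartbeats 1000000 in
lemma G_bound (n : ℕ) (b : ℝ) (hn : 1 ≤ n) (hb0 : 0 ≤ b) (hb1 : b < 1) :
    ((((n:ℝ)+1))^4)⁻¹ ≤ (n.choose ⌊b*n⌋₊ : ℝ) * b ^ (b*(n:ℝ)) * (1-b) ^ ((1-b)*(n:ℝ)) := by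
  have hn0 : (0:ℝ) < n := by exact_mod_cast hn
  set K := ⌊b*n⌋₊ with hKdef
  have hbn0 : 0 ≤ b * n := by positivity
  have hKle : (K:ℝ) ≤ b * n := Nat.floor_le hbn0
  have hKlt : b * n < K + 1 := Nat.lt_floor_add_one _
  have hKn : K < n := by
    have : b * n < n := by nlinarith
    have := Nat.floor_lt hbn0 |>.mpr (by exact_mod_cast this)
    exact_mod_cast this
  have h1b : 0 < 1 - b := by linarith
  have e1 : Real.exp 1 ≤ 3 := le_trans (le_of_lt Real.exp_one_lt_d9) (by norm_num)
  have e1pos : 0 < Real.exp 1 := Real.exp_pos 1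
  rcases eq_or_lt_of_le hb0 with hb | hbpos
  · -- b = 0
    have hb' : b = 0 := hb.symm
    subst hb'
    have hK0' : K = 0 := by rw [hKdef]; simp
    rw [hK0', Nat.choose_zero_right]
    simp only [Nat.cast_one, one_mul, zero_mul, Real.rpow_zero, sub_zero, Real.one_rpow, mul_one]
    have h14 : (1:ℝ) ≤ ((n:ℝ)+1)^4 := one_le_pow₀ (by linarith)
    rw [inv_le_one_iff₀]
    right
    exact h14
  · clear_value K
    rcases Nat.eq_zero_or_pos K with hK0 | hK1
    · -- Case A : K = 0
      rw [hK0]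
      simp only [Nat.choose_zero_right, Nat.cast_one, one_mul]
      have hbn1 : b * n ≤ 1 := by
        have : b * n < 0 + 1 := by rw [hK0] at hKlt; exact_mod_cast hKlt
        linarith
      have h1 : 1 / (Real.exp 1 * n) ≤ b ^ (b * (n:ℝ)) := helper2 n b hbpos hn hbn1
      have h2 : Real.exp (-1) ≤ (1-b) ^ ((1-b)*(n:ℝ)) := by
        have hlog : -(b/(1-b)) ≤ Real.log (1-b) := by
          have := Real.log_le_sub_one_of_pos (show 0 < 1/(1-b) by positivity)
          rw [Real.log_div one_ne_zero (ne_of_gt h1b), Real.log_one] at this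
          have heq : 1/(1-b) - 1 = b/(1-b) := by field_simp; ring
          linarith [heq ▸ this]
        have hexp : (1-b) ^ ((1-b)*(n:ℝ)) = Real.exp ((1-b)*(n:ℝ) * Real.log (1-b)) := by
          rw [Real.rpow_def_of_pos h1b]; ring_nf
        rw [hexp]
        apply Real.exp_le_exp.mpr
        have hstep : (1-b)*(n:ℝ) * (-(b/(1-b))) = -(b*n) := by field_simp
        have hmul := mul_le_mul_of_nonneg_left hlog (show (0:ℝ) ≤ (1-b)*(n:ℝ) by positivity)
        rw [hstep] at hmul
        linarith
      have hexp1 : Real.exp (-1) = 1 / Real.exp 1 := by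
        rw [Real.exp_neg]; field_simp
      calc ((((n:ℝ)+1))^4)⁻¹ ≤ 1 / (Real.exp 1 * n) * (1 / Real.exp 1) := by
            rw [div_mul_div_comm, one_mul]
            rw [inv_eq_one_div, div_le_div_iff₀ (by positivity) (by positivity)]
            have hee : Real.exp 1 * Real.exp 1 ≤ 9 := by
              have := mul_self_le_mul_self (le_of_lt e1pos) e1
              linarith
            have hn1 : (1:ℝ) ≤ n := by exact_mod_cast hn
            have h9n : 9 * (n:ℝ) ≤ ((n:ℝ)+1)^4 := by
              nlinarith [sq_nonneg ((n:ℝ)-1), sq_nonneg ((n:ℝ)+1), sq_nonneg (n:ℝ), mul_nonneg (mul_nonneg (by linarith : (0:ℝ) ≤ (n:ℝ)) (by linarith : (0:ℝ) ≤ (n:ℝ))) (by linarith : (0:ℝ) ≤ (n:ℝ))]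
            nlinarith [hn0, e1pos]
        _ ≤ b ^ (b*(n:ℝ)) * (1-b) ^ ((1-b)*(n:ℝ)) := by
            apply mul_le_mul h1 (hexp1 ▸ h2) (by positivity) (by positivity)
    · have hrpnn : 0 ≤ b ^ (b*(n:ℝ)) := Real.rpow_nonneg hb0 _
      have hrpnn2 : 0 ≤ (1-b) ^ ((1-b)*(n:ℝ)) := Real.rpow_nonneg (le_of_lt h1b) _
      have he2 : Real.exp (-2) = (Real.exp 1)⁻¹ * (Real.exp 1)⁻¹ := by
        rw [show (-2:ℝ) = (-1) + (-1) by norm_num, Real.exp_add, Real.exp_neg]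
      have hinv3 : (3:ℝ)⁻¹ ≤ (Real.exp 1)⁻¹ := inv_anti₀ e1pos e1
      have h19 : (1:ℝ)/9 ≤ Real.exp (-2) := by
        rw [he2, show (1:ℝ)/9 = 3⁻¹ * 3⁻¹ by norm_num]
        exact mul_le_mul hinv3 hinv3 (by norm_num) (by positivity)
      rcases eq_or_lt_of_le (show K + 1 ≤ n by omega) with hKn1 | hKn2
      · -- Case B : K = n - 1
        have hn2 : 2 ≤ n := by omega
        have hn2' : (2:ℝ) ≤ n := by exact_mod_cast hn2
        have hKr : (K:ℝ) = (n:ℝ) - 1 := by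
          have : ((K:ℕ):ℝ) + 1 = ((n:ℕ):ℝ) := by exact_mod_cast congrArg (Nat.cast (R := ℝ)) hKn1
          linarith
        have hch : (n.choose K : ℝ) = (n:ℝ) := by
          have h1 : n.choose K = n := by
            have h2 := Nat.choose_symm (show 1 ≤ n by omega) (n := n)
            rw [show K = n - 1 by omega, h2, Nat.choose_one_right]
          exact_mod_cast h1
        have hb_lb : ((n:ℝ)-1)/n ≤ b := by
          rw [div_le_iff₀ hn0]
          have := hKle
          rw [hKr] at this
          linarith
        have hA : Real.exp (-2) ≤ b ^ (b*(n:ℝ)) := by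
          calc Real.exp (-2) ≤ (((n:ℝ)-1)/n) ^ (n:ℕ) := helper3 n hn2
            _ ≤ b ^ (n:ℕ) := pow_le_pow_left₀ (div_nonneg (by linarith) (le_of_lt hn0)) hb_lb n
            _ = b ^ ((n:ℕ):ℝ) := (Real.rpow_natCast b n).symm
            _ ≤ b ^ (b*(n:ℝ)) := Real.rpow_le_rpow_of_exponent_ge hbpos (le_of_lt hb1) (by nlinarith)
        have hB : 1 / (Real.exp 1 * n) ≤ (1-b) ^ ((1-b)*(n:ℝ)) := by
          apply helper2 n (1-b) h1b hn
          have := hKle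
          rw [hKr] at this
          nlinarith
        have hRHS : (n:ℝ) * Real.exp (-2) * (1/(Real.exp 1 * n)) ≤ (n.choose K : ℝ) * b ^ (b*(n:ℝ)) * (1-b) ^ ((1-b)*(n:ℝ)) := by
          rw [hch]
          apply mul_le_mul _ hB (by positivity) (mul_nonneg (le_of_lt hn0) hrpnn)
          exact mul_le_mul_of_nonneg_left hA (le_of_lt hn0)
        refine le_trans ?_ hRHS
        have hprod : (n:ℝ) * Real.exp (-2) * (1/(Real.exp 1 * n)) = Real.exp (-2) * (Real.exp 1)⁻¹ := by
          field_simp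
        rw [hprod]
        have hpow : (81:ℝ) ≤ ((n:ℝ)+1)^4 := by
          calc (81:ℝ) = 3^4 := by norm_num
            _ ≤ ((n:ℝ)+1)^4 := pow_le_pow_left₀ (by norm_num) (by linarith) 4
        calc ((((n:ℝ)+1))^4)⁻¹ ≤ (27:ℝ)⁻¹ :=
              inv_anti₀ (by norm_num) (le_trans (by norm_num) hpow)
          _ = 3⁻¹*3⁻¹*3⁻¹ := by norm_num
          _ ≤ (Real.exp 1)⁻¹*(Real.exp 1)⁻¹*(Real.exp 1)⁻¹ :=
              mul_le_mul (mul_le_mul hinv3 hinv3 (by norm_num) (by positivity)) hinv3 (by norm_num) (by positivity)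
          _ = Real.exp (-2) * (Real.exp 1)⁻¹ := by rw [he2]
      · -- Case C : 1 ≤ K ≤ n-2
        have hm2 : 2 ≤ n - K := by omega
        have hn3 : 3 ≤ n := by omega
        have hn3' : (3:ℝ) ≤ n := by exact_mod_cast hn3
        have hK1' : (1:ℝ) ≤ K := by exact_mod_cast hK1
        have hKnR : (K:ℝ) < n := by exact_mod_cast hKn
        have hmcast : ((n - K : ℕ):ℝ) = (n:ℝ) - K := by
          rw [Nat.cast_sub (le_of_lt hKn)]
        have hm2' : (2:ℝ) ≤ ((n-K:ℕ):ℝ) := by exact_mod_cast hm2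
        have hnK1 : (1:ℝ) ≤ (n:ℝ) - K - 1 := by
          rw [← hmcast]; linarith
        have hb_lb : (K:ℝ)/n ≤ b := by rw [div_le_iff₀ hn0]; linarith
        have h1b_lb : (((n:ℝ)-K)-1)/n ≤ 1 - b := by
          rw [div_le_iff₀ hn0, show (1-b)*(n:ℝ) = (n:ℝ) - b*n by ring]
          linarith
        have hA : b ^ (K:ℕ) * b ≤ b ^ (b*(n:ℝ)) := by
          have h1 : b ^ ((K:ℝ)+1) ≤ b ^ (b*(n:ℝ)) :=
            Real.rpow_le_rpow_of_exponent_ge hbpos (le_of_lt hb1) (le_of_lt hKlt)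
          calc b ^ (K:ℕ) * b = b ^ ((K:ℝ)) * b ^ (1:ℝ) := by
                rw [Real.rpow_natCast, Real.rpow_one]
            _ = b ^ ((K:ℝ)+1) := (Real.rpow_add hbpos _ _).symm
            _ ≤ _ := h1
        have hB : (1-b) ^ (n-K:ℕ) ≤ (1-b) ^ ((1-b)*(n:ℝ)) := by
          have h1 : (1-b) ^ (((n-K:ℕ)):ℝ) ≤ (1-b) ^ ((1-b)*(n:ℝ)) := by
            apply Real.rpow_le_rpow_of_exponent_ge h1b (by linarith)
            rw [hmcast, show (1-b)*(n:ℝ) = (n:ℝ) - b*n by ring]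
            linarith
          rw [← Real.rpow_natCast (1-b) (n-K)]
          exact h1
        have hC : ((K:ℝ)/n) ^ (K:ℕ) ≤ b ^ (K:ℕ) := pow_le_pow_left₀ (by positivity) hb_lb K
        have hnKdivnn : (0:ℝ) ≤ ((n:ℝ)-K)/n := div_nonneg (by linarith) (le_of_lt hn0)
        have hD : (((n:ℝ)-K)/n) ^ (n-K:ℕ) * Real.exp (-2) ≤ (1-b) ^ (n-K:ℕ) := by
          have h6 : ((((n:ℝ)-K)-1)/n) ^ (n-K:ℕ) ≤ (1-b) ^ (n-K:ℕ) := by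
            apply pow_le_pow_left₀ _ h1b_lb
            have : (0:ℝ) ≤ (n:ℝ) - K - 1 := by linarith
            positivity
          have h7 : ((((n:ℝ)-K)-1)/n) ^ (n-K:ℕ)
              = ((((n:ℝ)-K))/n) ^ (n-K:ℕ) * ((((n-K:ℕ):ℝ)-1)/((n-K:ℕ):ℝ)) ^ (n-K:ℕ) := by
            rw [← mul_pow]
            congr 1
            rw [hmcast]
            have hnK0 : (n:ℝ) - K ≠ 0 := by linarith
            field_simp
          have h8 := helper3 (n-K) hm2
          calc (((n:ℝ)-K)/n) ^ (n-K:ℕ) * Real.exp (-2)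
              ≤ (((n:ℝ)-K)/n) ^ (n-K:ℕ) * ((((n-K:ℕ):ℝ)-1)/((n-K:ℕ):ℝ)) ^ (n-K:ℕ) := by
                apply mul_le_mul_of_nonneg_left h8 (pow_nonneg hnKdivnn _)
            _ = ((((n:ℝ)-K)-1)/n) ^ (n-K:ℕ) := h7.symm
            _ ≤ (1-b) ^ (n-K:ℕ) := h6
        have hmax := maxterm_real n K hn (le_of_lt hKn)
        have hbn' : ((n:ℝ))⁻¹ ≤ b := by
          rw [inv_eq_one_div, div_le_iff₀ hn0]
          linarith [hKle, hK1']
        have hbigC : (0:ℝ) ≤ (n.choose K : ℝ) * ((K:ℝ)/n)^(K:ℕ) * (((n:ℝ)-K)/n)^(n-K:ℕ) := by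
          apply mul_nonneg (by positivity) (pow_nonneg hnKdivnn _)
        have hassemble : ((n.choose K : ℝ) * ((K:ℝ)/n)^(K:ℕ) * (((n:ℝ)-K)/n)^(n-K:ℕ)) * Real.exp (-2) * b
            ≤ (n.choose K : ℝ) * b ^ (b*(n:ℝ)) * (1-b) ^ ((1-b)*(n:ℝ)) := by
          have hnn0 : (0:ℝ) ≤ (n.choose K : ℝ) := by positivity
          calc ((n.choose K : ℝ) * ((K:ℝ)/n)^(K:ℕ) * (((n:ℝ)-K)/n)^(n-K:ℕ)) * Real.exp (-2) * b
              = ((n.choose K : ℝ) * (((K:ℝ)/n)^(K:ℕ) * b)) * ((((n:ℝ)-K)/n)^(n-K:ℕ) * Real.exp (-2)) := by ring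
            _ ≤ ((n.choose K : ℝ) * (b^(K:ℕ) * b)) * ((1-b) ^ (n-K:ℕ)) := by
                apply mul_le_mul _ hD (mul_nonneg (pow_nonneg hnKdivnn _) (le_of_lt (Real.exp_pos _))) (mul_nonneg hnn0 (mul_nonneg (pow_nonneg hb0 _) hb0))
                apply mul_le_mul_of_nonneg_left _ hnn0
                exact mul_le_mul_of_nonneg_right hC hb0
            _ ≤ ((n.choose K : ℝ) * b ^ (b*(n:ℝ))) * ((1-b) ^ ((1-b)*(n:ℝ))) := by
                apply mul_le_mul _ hB (pow_nonneg (by linarith) _) (mul_nonneg hnn0 hrpnn)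
                exact mul_le_mul_of_nonneg_left hA hnn0
            _ = (n.choose K : ℝ) * b ^ (b*(n:ℝ)) * (1-b) ^ ((1-b)*(n:ℝ)) := by ring
        refine le_trans ?_ hassemble
        have hfinal : ((n:ℝ)+1)⁻¹ * Real.exp (-2) * ((n:ℝ))⁻¹
            ≤ ((n.choose K : ℝ) * ((K:ℝ)/n)^(K:ℕ) * (((n:ℝ)-K)/n)^(n-K:ℕ)) * Real.exp (-2) * b := by
          apply mul_le_mul _ hbn' (by positivity) (mul_nonneg hbigC (le_of_lt (Real.exp_pos _)))
          apply mul_le_mul_of_nonneg_right _ (le_of_lt (Real.exp_pos _))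
          rw [inv_eq_one_div]
          exact hmax
        refine le_trans ?_ hfinal
        have h9n : 9 * ((n:ℝ) * ((n:ℝ)+1)) ≤ ((n:ℝ)+1)^4 := by
          nlinarith [sq_nonneg ((n:ℝ)-1), sq_nonneg ((n:ℝ)+1), sq_nonneg (n:ℝ), mul_nonneg (mul_nonneg (by linarith : (0:ℝ) ≤ (n:ℝ)) (by linarith : (0:ℝ) ≤ (n:ℝ))) (by linarith : (0:ℝ) ≤ (n:ℝ))]
        calc ((((n:ℝ)+1))^4)⁻¹ ≤ (9 * ((n:ℝ) * ((n:ℝ)+1)))⁻¹ :=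
              inv_anti₀ (by positivity) h9n
          _ = ((n:ℝ)+1)⁻¹ * (1/9) * ((n:ℝ))⁻¹ := by
              field_simp
          _ ≤ ((n:ℝ)+1)⁻¹ * Real.exp (-2) * ((n:ℝ))⁻¹ := by
              apply mul_le_mul_of_nonneg_right _ (by positivity)
              exact mul_le_mul_of_nonneg_left h19 (by positivity)

lemma rpow_logb_mul (x y : ℝ) (hx : 0 < x) : (2:ℝ) ^ (Real.logb 2 x * y) = x ^ y := by
  rw [Real.rpow_mul (by norm_num : (0:ℝ) ≤ 2), Real.rpow_logb (by norm_num) (by norm_num) hx]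

set_option maxHeartbeats 1000000 in
lemma key_ineq (n : ℕ) (p b : ℝ) (hn : 1 ≤ n) (hp : 0 < p) (hp1 : p < 1)
    (hb0 : 0 ≤ b) (hbp : b < p) :
    (2:ℝ) ^ (-(n:ℝ) * klB b p) ≤ ((n:ℝ)+1)^4 * max 1 (p/(1-p)) * binPMF n ⌊b*(n:ℝ)⌋₊ p := by
  have hb1 : b < 1 := lt_trans hbp hp1
  have hn0 : (0:ℝ) < n := by exact_mod_cast hn
  have h1p : 0 < 1 - p := by linarith
  have hM1 : (1:ℝ) ≤ max 1 (p/(1-p)) := le_max_left _ _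
  have hN1 : (1:ℝ) ≤ ((n:ℝ)+1)^4 := one_le_pow₀ (by linarith)
  set K := ⌊b*(n:ℝ)⌋₊ with hKdef
  have hbn0 : 0 ≤ b * n := mul_nonneg hb0 (le_of_lt hn0)
  have hKle : (K:ℝ) ≤ b*n := Nat.floor_le hbn0
  have hKlt : b*n < K + 1 := Nat.lt_floor_add_one _
  have hKn : K < n := by
    have h1 : b * n < n := by nlinarith
    exact_mod_cast Nat.floor_lt hbn0 |>.mpr (by exact_mod_cast h1)
  rcases eq_or_lt_of_le hb0 with hb | hbpos
  · -- b = 0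
    have hb' : b = 0 := hb.symm
    subst hb'
    have hK0 : K = 0 := by rw [hKdef]; simp
    have hkl : klB 0 p = Real.logb 2 ((1:ℝ)/(1-p)) := by
      unfold klB; simp
    rw [hkl, hK0]
    have hLHS : (2:ℝ) ^ (-(n:ℝ) * Real.logb 2 ((1:ℝ)/(1-p))) = (1-p)^(n:ℕ) := by
      rw [show -(n:ℝ) * Real.logb 2 ((1:ℝ)/(1-p)) = Real.logb 2 ((1:ℝ)/(1-p)) * (-(n:ℝ)) by ring]
      rw [rpow_logb_mul _ _ (by positivity)]
      rw [one_div, Real.inv_rpow h1p.le, Real.rpow_neg h1p.le, inv_inv, Real.rpow_natCast]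
    rw [hLHS]
    have hpmf : binPMF n 0 p = (1-p)^(n:ℕ) := by
      unfold binPMF; simp
    rw [hpmf]
    have hpos : (0:ℝ) ≤ (1-p)^(n:ℕ) := by positivity
    have hNM : (1:ℝ) ≤ ((n:ℝ)+1)^4 * max 1 (p/(1-p)) := by nlinarith [hN1, hM1]
    exact le_mul_of_one_le_left hpos hNM
  · -- b > 0
    have h1b : 0 < 1 - b := by linarith
    have hD1 : (0:ℝ) < b ^ (b*(n:ℝ)) := Real.rpow_pos_of_pos hbpos _
    have hD2 : (0:ℝ) < (1-b) ^ ((1-b)*(n:ℝ)) := Real.rpow_pos_of_pos h1b _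
    set t := b*(n:ℝ) - K with htdef
    have ht0 : 0 ≤ t := by rw [htdef]; linarith
    have ht1 : t ≤ 1 := by rw [htdef]; linarith
    have hmcast : ((n-K:ℕ):ℝ) = (n:ℝ) - K := Nat.cast_sub (le_of_lt hKn)
    have hklB : -(n:ℝ) * klB b p
        = Real.logb 2 (p/b) * (b*(n:ℝ)) + Real.logb 2 ((1-p)/(1-b)) * ((1-b)*(n:ℝ)) := by
      unfold klB
      rw [Real.logb_div (ne_of_gt hbpos) (ne_of_gt hp),
          Real.logb_div (ne_of_gt h1b) (ne_of_gt h1p),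
          Real.logb_div (ne_of_gt hp) (ne_of_gt hbpos),
          Real.logb_div (ne_of_gt h1p) (ne_of_gt h1b)]
      ring
    have hLHS : (2:ℝ)^(-(n:ℝ)*klB b p)
        = (p^(b*(n:ℝ)) * (1-p)^((1-b)*(n:ℝ))) / (b^(b*(n:ℝ)) * (1-b)^((1-b)*(n:ℝ))) := by
      rw [hklB, Real.rpow_add (by norm_num : (0:ℝ) < 2),
          rpow_logb_mul _ _ (by positivity), rpow_logb_mul _ _ (by positivity),
          Real.div_rpow hp.le hbpos.le, Real.div_rpow h1p.le h1b.le,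
          div_mul_div_comm]
    rw [hLHS]
    -- p-part bound
    have hppart : p^(b*(n:ℝ)) * (1-p)^((1-b)*(n:ℝ))
        ≤ max 1 (p/(1-p)) * (p^(K:ℕ) * (1-p)^(n-K:ℕ)) := by
      have e1 : p^(b*(n:ℝ)) = p^(K:ℕ) * p^t := by
        rw [← Real.rpow_natCast p K, ← Real.rpow_add hp]
        congr 1
        rw [htdef]; ring
      have e2 : (1-p)^((1-b)*(n:ℝ)) = (1-p)^(n-K:ℕ) * ((1-p)^t)⁻¹ := by
        rw [← Real.rpow_natCast (1-p) (n-K), ← Real.rpow_neg h1p.le, ← Real.rpow_add h1p]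
        congr 1
        rw [hmcast, htdef]; ring
      have e3 : (p/(1-p))^t = p^t * ((1-p)^t)⁻¹ := by
        rw [Real.div_rpow hp.le h1p.le, div_eq_mul_inv]
      have hrhot : (p/(1-p))^t ≤ max 1 (p/(1-p)) := by
        rcases le_total 1 (p/(1-p)) with h | h
        · calc (p/(1-p))^t ≤ (p/(1-p))^(1:ℝ) := Real.rpow_le_rpow_of_exponent_le h ht1
            _ = p/(1-p) := Real.rpow_one _
            _ ≤ _ := le_max_right _ _
        · calc (p/(1-p))^t ≤ 1 := Real.rpow_le_one (by positivity) h ht0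
            _ ≤ _ := le_max_left _ _
      calc p^(b*(n:ℝ)) * (1-p)^((1-b)*(n:ℝ))
          = (p^(K:ℕ) * (1-p)^(n-K:ℕ)) * ((p/(1-p))^t) := by
            rw [e1, e2, e3]; ring
        _ ≤ (p^(K:ℕ) * (1-p)^(n-K:ℕ)) * max 1 (p/(1-p)) := by
            apply mul_le_mul_of_nonneg_left hrhot (by positivity)
        _ = max 1 (p/(1-p)) * (p^(K:ℕ) * (1-p)^(n-K:ℕ)) := by ring
    -- G bound
    have hGb := G_bound n b hn hb0 hb1
    rw [← hKdef] at hGb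
    have hG1 : 1 ≤ ((n:ℝ)+1)^4 * ((n.choose K : ℝ) * (b^(b*(n:ℝ)) * (1-b)^((1-b)*(n:ℝ)))) := by
      have := mul_le_mul_of_nonneg_left hGb (show (0:ℝ) ≤ ((n:ℝ)+1)^4 by positivity)
      rw [mul_inv_cancel₀ (by positivity : (((n:ℝ)+1)^4) ≠ 0)] at this
      calc (1:ℝ) ≤ ((n:ℝ)+1)^4 * ((n.choose K:ℝ) * b^(b*(n:ℝ)) * (1-b)^((1-b)*(n:ℝ))) := this
        _ = ((n:ℝ)+1)^4 * ((n.choose K : ℝ) * (b^(b*(n:ℝ)) * (1-b)^((1-b)*(n:ℝ)))) := by ring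
    rw [div_le_iff₀ (by positivity)]
    have hpk : (0:ℝ) ≤ p^(K:ℕ) * (1-p)^(n-K:ℕ) := by positivity
    calc p^(b*(n:ℝ)) * (1-p)^((1-b)*(n:ℝ))
        ≤ max 1 (p/(1-p)) * (p^(K:ℕ) * (1-p)^(n-K:ℕ)) := hppart
      _ = max 1 (p/(1-p)) * (p^(K:ℕ) * (1-p)^(n-K:ℕ)) * 1 := by ring
      _ ≤ max 1 (p/(1-p)) * (p^(K:ℕ) * (1-p)^(n-K:ℕ))
            * (((n:ℝ)+1)^4 * ((n.choose K : ℝ) * (b^(b*(n:ℝ)) * (1-b)^((1-b)*(n:ℝ))))) := by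
          apply mul_le_mul_of_nonneg_left hG1
          have h0M : (0:ℝ) ≤ max 1 (p/(1-p)) := by positivity
          exact mul_nonneg h0M hpk
      _ = ((n:ℝ)+1)^4 * max 1 (p/(1-p)) * binPMF n K p * (b^(b*(n:ℝ)) * (1-b)^((1-b)*(n:ℝ))) := by
          unfold binPMF
          ring

set_option maxHeartbeats 1000000 in
lemma pmf_ge (r n : ℕ) (p δ b : ℝ) (hr : 1 ≤ r) (hn : 1 ≤ n)
    (hp : 0 < p) (hp1 : p < 1) (hδ0 : 0 < δ) (hδ1 : δ < 1) (hb0 : 0 ≤ b) (hbp : b < p)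
    (hklb : klB b p = (Real.logb 2 r - Real.logb 2 (Real.log (2 / δ))
      - 4 * Real.logb 2 ((n : ℝ) + 1) - max 0 (Real.logb 2 (p / (1 - p)))) / n) :
    Real.log (2 / δ) / r ≤ binPMF n ⌊b*(n:ℝ)⌋₊ p := by
  have hn0 : (0:ℝ) < n := by exact_mod_cast hn
  have hr0 : (0:ℝ) < r := by exact_mod_cast hr
  have h1p : 0 < 1 - p := by linarith
  set L := Real.log (2/δ) with hLdef
  have hL0 : 0 < L := Real.log_pos (by rw [lt_div_iff₀ hδ0]; linarith)
  set ρ := p/(1-p) with hρdef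
  have hρ0 : 0 < ρ := by positivity
  have hM0 : (0:ℝ) < max 1 ρ := lt_of_lt_of_le one_pos (le_max_left _ _)
  have hN0 : (0:ℝ) < ((n:ℝ)+1)^4 := by positivity
  -- rearrange hklb
  rw [eq_div_iff (ne_of_gt hn0)] at hklb
  have hlogL : Real.logb 2 L
      = Real.logb 2 r - ((n:ℝ)*klB b p + 4*Real.logb 2 ((n:ℝ)+1) + max 0 (Real.logb 2 ρ)) := by
    rw [hρdef]; linarith [hklb]
  have hmax : (2:ℝ)^(max 0 (Real.logb 2 ρ)) = max 1 ρ := by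
    rcases le_total (Real.logb 2 ρ) 0 with h | h
    · rw [max_eq_left h, Real.rpow_zero]
      have hρ1 : ρ ≤ 1 := by
        by_contra hc
        push_neg at hc
        exact absurd (show (0:ℝ) < Real.logb 2 ρ from Real.logb_pos (by norm_num) hc) (by linarith)
      rw [max_eq_left hρ1]
    · rw [max_eq_right h, Real.rpow_logb (by norm_num) (by norm_num) hρ0]
      have hρ1 : 1 ≤ ρ := by
        by_contra hc
        push_neg at hc
        exact absurd (show Real.logb 2 ρ < 0 from Real.logb_neg (by norm_num) hρ0 hc) (by linarith)
      rw [max_eq_right hρ1]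
  have hpow4 : (2:ℝ)^(4*Real.logb 2 ((n:ℝ)+1)) = ((n:ℝ)+1)^4 := by
    rw [show (4:ℝ)*Real.logb 2 ((n:ℝ)+1) = Real.logb 2 ((n:ℝ)+1) * 4 by ring,
        rpow_logb_mul _ _ (by linarith),
        show (4:ℝ) = ((4:ℕ):ℝ) by norm_num, Real.rpow_natCast]
  have hLval : L = (r:ℝ) * ((2:ℝ)^(-((n:ℝ)*klB b p)) * ((((n:ℝ)+1)^4)⁻¹ * (max 1 ρ)⁻¹)) := by
    calc L = (2:ℝ)^(Real.logb 2 L) := (Real.rpow_logb (by norm_num) (by norm_num) hL0).symm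
      _ = (2:ℝ)^(Real.logb 2 (r:ℝ) + (-((n:ℝ)*klB b p)) + (-(4*Real.logb 2 ((n:ℝ)+1))) + (-(max 0 (Real.logb 2 ρ)))) := by
          rw [hlogL]; ring_nf
      _ = (2:ℝ)^(Real.logb 2 (r:ℝ)) * (2:ℝ)^(-((n:ℝ)*klB b p)) * ((2:ℝ)^(4*Real.logb 2 ((n:ℝ)+1)))⁻¹ * ((2:ℝ)^(max 0 (Real.logb 2 ρ)))⁻¹ := by
          rw [Real.rpow_add (by norm_num : (0:ℝ) < 2), Real.rpow_add (by norm_num : (0:ℝ) < 2),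
              Real.rpow_add (by norm_num : (0:ℝ) < 2), Real.rpow_neg (by norm_num : (0:ℝ) ≤ 2),
              Real.rpow_neg (by norm_num : (0:ℝ) ≤ 2), Real.rpow_neg (by norm_num : (0:ℝ) ≤ 2)]
      _ = (r:ℝ) * ((2:ℝ)^(-((n:ℝ)*klB b p)) * ((((n:ℝ)+1)^4)⁻¹ * (max 1 ρ)⁻¹)) := by
          rw [Real.rpow_logb (by norm_num) (by norm_num) hr0, hpow4, hmax]
          ring
  have hkey := key_ineq n p b hn hp hp1 hb0 hbp
  have hEq : L / r = (2:ℝ)^(-((n:ℝ)*klB b p)) * ((((n:ℝ)+1)^4)⁻¹ * (max 1 ρ)⁻¹) := by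
    rw [hLval, mul_comm]
    exact mul_div_cancel_right₀ _ (ne_of_gt hr0)
  rw [hEq]
  have hE0 : (0:ℝ) ≤ (2:ℝ)^(-((n:ℝ)*klB b p)) := le_of_lt (Real.rpow_pos_of_pos (by norm_num) _)
  rw [show (2:ℝ)^(-((n:ℝ)*klB b p)) * ((((n:ℝ)+1)^4)⁻¹ * (max 1 ρ)⁻¹)
      = (2:ℝ)^(-((n:ℝ)*klB b p)) / (((n:ℝ)+1)^4 * max 1 ρ) by field_simp]
  rw [div_le_iff₀ (by positivity)]
  calc (2:ℝ)^(-((n:ℝ)*klB b p)) = (2:ℝ)^(-(n:ℝ)*klB b p) := by ring_nf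
    _ ≤ ((n:ℝ)+1)^4 * max 1 ρ * binPMF n ⌊b*(n:ℝ)⌋₊ p := hkey
    _ = binPMF n ⌊b*(n:ℝ)⌋₊ p * (((n:ℝ)+1)^4 * max 1 ρ) := by ring

theorem min_binomial_lower_event (r n : ℕ) (p δ b : ℝ)
    (hp : 0 < p) (hp1 : p < 1) (hδ0 : 0 < δ) (hδ1 : δ < 1)
    (hb : b ∈ Set.Ico (0 : ℝ) p)
    (hklb : klB b p = (Real.logb 2 r - Real.logb 2 (Real.log (2 / δ))
      - 4 * Real.logb 2 ((n : ℝ) + 1) - max 0 (Real.logb 2 (p / (1 - p)))) / n)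
    (Ω : Type*) [MeasurableSpace Ω] (μ : Measure Ω) [IsProbabilityMeasure μ]
    (X : Fin r → Ω → ℕ) (hXm : ∀ i, Measurable (X i))
    (hindep : iIndepFun X μ)
    (hmarg : ∀ i k, μ {ω | X i ω = k} = ENNReal.ofReal (binPMF n k p)) :
    (μ {ω | ∀ i, b * n < (X i ω : ℝ)}).toReal ≤ δ / 2 := by
  obtain ⟨hb0, hbp⟩ := hb
  have hklpos : 0 < klB b p := klB_aux_pos hb0 hbp hp1
  set L := Real.log (2/δ) with hLdef
  have hL0 : 0 < L := Real.log_pos (by rw [lt_div_iff₀ hδ0]; linarith)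
  -- n ≥ 1
  have hn : 1 ≤ n := by
    rcases Nat.eq_zero_or_pos n with h0 | h
    · exfalso
      rw [h0] at hklb
      rw [Nat.cast_zero, div_zero] at hklb
      linarith
    · exact h
  have hn0 : (0:ℝ) < n := by exact_mod_cast hn
  have hn1 : (1:ℝ) ≤ n := by exact_mod_cast hn
  -- r ≥ 1
  have hr : 1 ≤ r := by
    rcases Nat.eq_zero_or_pos r with h0 | h
    · exfalso
      rw [h0] at hklb
      rw [Nat.cast_zero, Real.logb_zero] at hklb
      have hlog22 : Real.logb 2 (2:ℝ) = 1 := Real.logb_self_eq_one (b := 2) (by norm_num)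
      have hlogn : 1 ≤ Real.logb 2 ((n:ℝ)+1) := by
        calc (1:ℝ) = Real.logb 2 2 := hlog22.symm
          _ ≤ Real.logb 2 ((n:ℝ)+1) :=
              Real.logb_le_logb_of_le (by norm_num) (by norm_num) (by linarith)
      have hL2 : Real.log 2 ≤ L := by
        rw [hLdef]
        apply Real.log_le_log (by norm_num)
        rw [le_div_iff₀ hδ0]
        nlinarith
      have hLhalf : (2⁻¹:ℝ) ≤ L := by
        nlinarith [Real.log_two_gt_d9, hL2]
      have hloghalf : Real.logb 2 (2⁻¹:ℝ) = -1 := by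
        rw [Real.logb_inv, hlog22]
      have hlogL : -1 ≤ Real.logb 2 L := by
        calc (-1:ℝ) = Real.logb 2 (2⁻¹:ℝ) := hloghalf.symm
          _ ≤ Real.logb 2 L := Real.logb_le_logb_of_le (by norm_num) (by norm_num) hLhalf
      have hmax0 : 0 ≤ max 0 (Real.logb 2 (p/(1-p))) := le_max_left _ _
      have hnum : 0 - Real.logb 2 L - 4*Real.logb 2 ((n:ℝ)+1) - max 0 (Real.logb 2 (p/(1-p))) < 0 := by
        linarith
      have hkl2 : klB b p < 0 := by
        rw [hklb]
        exact div_neg_of_neg_of_pos hnum hn0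
      linarith
    · exact h
  have hr0 : (0:ℝ) < r := by exact_mod_cast hr
  set K := ⌊b*(n:ℝ)⌋₊ with hKdef
  set q := binPMF n K p with hqdef
  have hq : L / r ≤ q := pmf_ge r n p δ b hr hn hp hp1 hδ0 hδ1 hb0 hbp hklb
  have hq0 : 0 < q := lt_of_lt_of_le (div_pos hL0 hr0) hq
  have hbn0 : 0 ≤ b * (n:ℝ) := mul_nonneg hb0 (le_of_lt hn0)
  have hKle : (K:ℝ) ≤ b * n := Nat.floor_le hbn0
  have i0 : Fin r := ⟨0, hr⟩
  have hq1 : q ≤ 1 := by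
    have h1 := hmarg i0 K
    have hle : μ {ω | X i0 ω = K} ≤ 1 := prob_le_one
    rw [h1] at hle
    exact (ENNReal.ofReal_le_one).mp hle
  -- per-coordinate bound
  have hcoord : ∀ i, μ {ω | b*(n:ℝ) < (X i ω : ℝ)} ≤ ENNReal.ofReal (1 - q) := by
    intro i
    have hsub : {ω | b*(n:ℝ) < (X i ω:ℝ)} ⊆ {ω | X i ω = K}ᶜ := by
      intro ω hω hc
      simp only [Set.mem_setOf_eq] at hω hc
      rw [hc] at hω
      linarith
    have hms : MeasurableSet {ω | X i ω = K} := (hXm i) (measurableSet_singleton K)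
    calc μ {ω | b*(n:ℝ) < (X i ω:ℝ)} ≤ μ ({ω | X i ω = K}ᶜ) := measure_mono hsub
      _ = 1 - μ {ω | X i ω = K} := by
          rw [measure_compl hms (measure_ne_top μ _), measure_univ]
      _ = 1 - ENNReal.ofReal q := by rw [hmarg i K]
      _ = ENNReal.ofReal (1 - q) := by
          rw [ENNReal.ofReal_sub _ (le_of_lt hq0), ENNReal.ofReal_one]
  -- independence
  have hset : {ω | ∀ i, b*(n:ℝ) < ((X i ω : ℕ):ℝ)} = ⋂ i, {ω | b*(n:ℝ) < ((X i ω:ℕ):ℝ)} := by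
    ext ω; simp [Set.mem_iInter]
  have hprod : μ (⋂ i, {ω | b*(n:ℝ) < ((X i ω:ℕ):ℝ)}) = ∏ i, μ {ω | b*(n:ℝ) < ((X i ω:ℕ):ℝ)} := by
    apply hindep.meas_iInter
    intro i
    exact ⟨{k : ℕ | b*(n:ℝ) < (k:ℝ)}, trivial, rfl⟩
  rw [hset, hprod]
  have hprodle : (∏ i, μ {ω | b*(n:ℝ) < ((X i ω:ℕ):ℝ)}) ≤ (ENNReal.ofReal (1-q))^r := by
    calc (∏ i, μ {ω | b*(n:ℝ) < ((X i ω:ℕ):ℝ)})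
        ≤ ∏ _i : Fin r, ENNReal.ofReal (1-q) := Finset.prod_le_prod' (fun i _ => hcoord i)
      _ = (ENNReal.ofReal (1-q))^r := by
          rw [Finset.prod_const, Finset.card_univ, Fintype.card_fin]
  have hfin : (ENNReal.ofReal (1-q))^r ≠ ⊤ := by
    apply ENNReal.pow_ne_top ENNReal.ofReal_ne_top
  calc (∏ i, μ {ω | b*(n:ℝ) < ((X i ω:ℕ):ℝ)}).toReal
      ≤ ((ENNReal.ofReal (1-q))^r).toReal := ENNReal.toReal_mono hfin hprodle
    _ = (1-q)^r := by
        rw [ENNReal.toReal_pow, ENNReal.toReal_ofReal (by linarith)]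
    _ ≤ (Real.exp (-q))^r := by
        apply pow_le_pow_left₀ (by linarith)
        linarith [Real.add_one_le_exp (-q)]
    _ = Real.exp ((r:ℕ) * (-q)) := (Real.exp_nat_mul _ r).symm
    _ ≤ Real.exp (-L) := by
        apply Real.exp_le_exp.mpr
        rw [div_le_iff₀ hr0] at hq
        nlinarith [hq]
    _ = δ / 2 := by
        rw [hLdef, Real.exp_neg, Real.exp_log (by positivity), inv_div]
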